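/- Let H be a real Hilbert space and let f : H → ℝ ∪ {+∞} be a proper lower semicontinuous convex function (f ∈ Γ₀(H)). Then for every x ∈ H, the Moreau envelope converges pointwise to f from below as ε → 0⁺: ^εf(x) is nondecreasing as ε decreases and lim_{ε→0⁺} ^εf(x) = sup_{ε>0} ^εf(x) = f(x), the limit taken in the extended reals (the statement holds even when f(x) = +∞). -/

import Mathlib

noncomputable section
open Filter Topology Pointwise

variable {H : Type*} [NormedAddCommGroup H] [InnerProductSpace ℝ H] [CompleteSpace H]

/-- An extended-real-valued function `f : H → ℝ ∪ {+∞}` (i.e. never `-∞`) is *proper*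
if it is finite at at least one point. -/
def EProper (f : H → EReal) : Prop := (∀ x, f x ≠ ⊥) ∧ (∃ x, f x ≠ ⊤)

/-- The infimal convolution `(f □ g)(x) = ⨅_{y} (f y + g (x - y))`. -/
def infConv (f g : H → EReal) (x : H) : EReal := ⨅ y : H, f y + g (x - y)

/-- The convex conjugate `f*(φ) = ⨆_{x} (⟨φ, x⟩ - f x)`. -/
def conj (f : H → EReal) (φ : H) : EReal := ⨆ x : H, ((inner ℝ φ x : ℝ) : EReal) - f x

/-- Convexity of an extended-real-valued function (extended-real arithmetic). -/
def EConvexOn (f : H → EReal) : Prop :=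
  ∀ x y : H, ∀ t : ℝ, 0 < t → t < 1 →
    f (t • x + (1 - t) • y) ≤ (t : EReal) * f x + ((1 - t : ℝ) : EReal) * f y

/-- Strict convexity: strict inequality whenever `x ≠ y` and both values are finite. -/
def EStrictConvexOn (f : H → EReal) : Prop :=
  ∀ x y : H, x ≠ y → f x ≠ ⊤ → f y ≠ ⊤ → ∀ t : ℝ, 0 < t → t < 1 →
    f (t • x + (1 - t) • y) < (t : EReal) * f x + ((1 - t : ℝ) : EReal) * f y

/-- `f` is coercive: `f x → +∞` as `‖x‖ → +∞`. -/
def ECoercive (f : H → EReal) : Prop :=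
  ∀ M : ℝ, ∃ R : ℝ, ∀ x : H, R ≤ ‖x‖ → (M : EReal) ≤ f x

/-- `f` is supercoercive: `f x / ‖x‖ → +∞` as `‖x‖ → +∞`. -/
def ESupercoercive (f : H → EReal) : Prop :=
  ∀ M : ℝ, ∃ R : ℝ, ∀ x : H, R ≤ ‖x‖ → ((M * ‖x‖ : ℝ) : EReal) ≤ f x

/-- The Moreau envelope `ᵉf(x) = ⨅_{y} (f y + ‖x - y‖² / (2ε))`. -/
def moreau (ε : ℝ) (f : H → EReal) (x : H) : EReal :=
  ⨅ y : H, f y + ((‖x - y‖ ^ 2 / (2 * ε) : ℝ) : EReal)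

/-- `p` is a minimizer of `y ↦ f y + ‖x - y‖²/(2ε)`, i.e. a proximal point of `f` at `x`. -/
def IsProx (ε : ℝ) (f : H → EReal) (x p : H) : Prop :=
  ∀ y : H, f p + ((‖x - p‖ ^ 2 / (2 * ε) : ℝ) : EReal)
    ≤ f y + ((‖x - y‖ ^ 2 / (2 * ε) : ℝ) : EReal)

/-- The subdifferential `∂f(p) = {φ : f p finite and ∀ y, f y ≥ f p + ⟨φ, y - p⟩}`. -/
def subdiff (f : H → EReal) (p : H) : Set H :=
  {φ : H | f p ≠ ⊤ ∧ ∀ y : H, f p + ((inner ℝ φ (y - p) : ℝ) : EReal) ≤ f y}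


private lemma keyineq (t δ ε K A B : ℝ) (hδ0 : 0 < δ) (hge : δ ≤ t) (hε : 0 < ε) (hε1 : ε ≤ 1)
    (hε2 : ε ≤ δ ^ 2 / (4 * B)) (hB : B = |A| + K ^ 2 + 1) (_hK : 0 ≤ K) :
    A ≤ t ^ 2 / (2 * ε) - K * t := by
  have hB0 : 0 < B := by rw [hB]; positivity
  have h3 : ε * (4 * B) ≤ δ ^ 2 := by
    rw [le_div_iff₀ (by positivity)] at hε2; linarith
  have habs : A ≤ |A| := le_abs_self A
  have hmain : A * (2 * ε) ≤ t ^ 2 - 2 * ε * K * t := by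
    nlinarith [sq_nonneg (t - 2 * ε * K),
      mul_le_mul_of_nonneg_left hε1 (mul_nonneg hε.le (sq_nonneg K)), sq_nonneg K,
      mul_pos hδ0 hδ0, mul_le_mul hge hge hδ0.le (le_trans hδ0.le hge)]
  have h4 := (le_div_iff₀ (by positivity : (0:ℝ) < 2 * ε)).2 hmain
  calc A ≤ (t ^ 2 - 2 * ε * K * t) / (2 * ε) := h4
  _ = t ^ 2 / (2 * ε) - K * t := by field_simp

private lemma epi_convex (f : H → EReal) (hf₀ : EProper f) (hf₂ : EConvexOn f) :
    Convex ℝ {p : H × ℝ | f p.1 ≤ (p.2 : EReal)} := by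
  rintro ⟨y₁, t₁⟩ h₁ ⟨y₂, t₂⟩ h₂ a b ha hb hab
  simp only [Set.mem_setOf_eq] at h₁ h₂ ⊢
  rcases eq_or_lt_of_le ha with rfl | ha'
  · have hb1 : b = 1 := by linarith
    subst hb1; simpa using h₂
  rcases eq_or_lt_of_le hb with rfl | hb'
  · have ha1 : a = 1 := by linarith
    subst ha1; simpa using h₁
  · have hab' : b = 1 - a := by linarith
    have ha2 : a < 1 := by linarith
    have key := hf₂ y₁ y₂ a ha' ha2
    have hne1 : f y₁ ≠ ⊤ := fun h => by simp [h] at h₁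
    have hne2 : f y₂ ≠ ⊤ := fun h => by simp [h] at h₂
    set s₁ := (f y₁).toReal with hs₁
    set s₂ := (f y₂).toReal with hs₂
    have e1 : f y₁ = (s₁ : EReal) := (EReal.coe_toReal hne1 (hf₀.1 y₁)).symm
    have e2 : f y₂ = (s₂ : EReal) := (EReal.coe_toReal hne2 (hf₀.1 y₂)).symm
    rw [e1, e2] at key
    have hs1t : s₁ ≤ t₁ := by rwa [e1, EReal.coe_le_coe_iff] at h₁
    have hs2t : s₂ ≤ t₂ := by rwa [e2, EReal.coe_le_coe_iff] at h₂
    have q1 : (a • (y₁, t₁) + b • (y₂, t₂) : H × ℝ).1 = a • y₁ + (1 - a) • y₂ := by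
      simp [hab']
    rw [q1]
    have q2 : (a • (y₁, t₁) + b • (y₂, t₂) : H × ℝ).2 = a * t₁ + b * t₂ := by
      simp [smul_eq_mul]
    rw [q2]
    calc f (a • y₁ + (1 - a) • y₂) ≤ (a : EReal) * s₁ + ((1 - a : ℝ) : EReal) * s₂ := key
    _ = ((a * s₁ + (1 - a) * s₂ : ℝ) : EReal) := by
        rw [← EReal.coe_mul, ← EReal.coe_mul, ← EReal.coe_add]
    _ ≤ ((a * t₁ + b * t₂ : ℝ) : EReal) := by
        rw [EReal.coe_le_coe_iff, hab']
        have := ha'.le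
        nlinarith

private lemma epi_closed (f : H → EReal) (hf₁ : LowerSemicontinuous f) :
    IsClosed {p : H × ℝ | f p.1 ≤ (p.2 : EReal)} := by
  rw [← isOpen_compl_iff, isOpen_iff_mem_nhds]
  rintro ⟨y, t⟩ h
  simp only [Set.mem_compl_iff, Set.mem_setOf_eq, not_le] at h
  obtain ⟨c, hc1, hc2⟩ := EReal.exists_between_coe_real h
  have hopen : IsOpen {z : H | (c : EReal) < f z} := hf₁.isOpen_preimage c
  have hmem : {z : H | (c : EReal) < f z} ×ˢ Set.Iio c ∈ 𝓝 ((y, t) : H × ℝ) := by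
    apply (hopen.prod isOpen_Iio).mem_nhds
    exact ⟨hc2, by exact_mod_cast hc1⟩
  filter_upwards [hmem]
  rintro ⟨z, s⟩ ⟨hz, hs⟩
  simp only [Set.mem_compl_iff, Set.mem_setOf_eq, not_le]
  exact lt_trans (by exact_mod_cast hs) hz

private lemma exists_affine_minorant (f : H → EReal) (hf₀ : EProper f)
    (hf₁ : LowerSemicontinuous f) (hf₂ : EConvexOn f) :
    ∃ (ψ : H →L[ℝ] ℝ) (c : ℝ), ∀ y, ((ψ y + c : ℝ) : EReal) ≤ f y := by
  have hconv := epi_convex f hf₀ hf₂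
  have hcl := epi_closed f hf₁
  obtain ⟨x₀, hx₀⟩ := hf₀.2
  set r₀ := (f x₀).toReal with hr₀
  have e₀ : f x₀ = (r₀ : EReal) := (EReal.coe_toReal hx₀ (hf₀.1 x₀)).symm
  have hmem : ((x₀, r₀) : H × ℝ) ∈ {p : H × ℝ | f p.1 ≤ (p.2 : EReal)} := by
    simp [Set.mem_setOf_eq, e₀]
  have hnot : ((x₀, r₀ - 1) : H × ℝ) ∉ {p : H × ℝ | f p.1 ≤ (p.2 : EReal)} := by
    simp only [Set.mem_setOf_eq, not_le, e₀]
    exact_mod_cast sub_one_lt r₀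
  obtain ⟨L, u, hLu, hE⟩ := geometric_hahn_banach_point_closed hconv hcl hnot
  have hL : ∀ (y : H) (t : ℝ), L (y, t) = L (y, 0) + t * L (0, 1) := by
    intro y t
    have hyt : ((y, t) : H × ℝ) = (y, 0) + t • ((0 : H), (1 : ℝ)) := by
      simp [Prod.ext_iff]
    rw [hyt, map_add, map_smul, smul_eq_mul]
  set a := L (0, 1) with ha
  have ha0 : 0 < a := by
    have h1 := hE _ hmem
    rw [hL] at h1 hLu
    nlinarith
  set φ : H →L[ℝ] ℝ := L.comp (ContinuousLinearMap.inl ℝ H ℝ) with hφ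
  have hφapp : ∀ y : H, φ y = L (y, 0) := fun y => rfl
  refine ⟨(-a⁻¹) • φ, u / a, fun y => ?_⟩
  by_cases hy : f y = ⊤
  · simp [hy]
  · set t := (f y).toReal with ht
    have ey : f y = (t : EReal) := (EReal.coe_toReal hy (hf₀.1 y)).symm
    have hmemy : ((y, t) : H × ℝ) ∈ {p : H × ℝ | f p.1 ≤ (p.2 : EReal)} := by
      simp [Set.mem_setOf_eq, ey]
    have h1 := hE _ hmemy
    rw [hL, ← hφapp] at h1
    rw [ey, EReal.coe_le_coe_iff]
    have happ : ((-a⁻¹) • φ) y = -a⁻¹ * φ y := rfl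
    rw [happ]
    have h2 : u / a < φ y / a + t := by
      rw [div_add' _ _ _ ha0.ne', div_lt_div_iff₀ ha0 ha0]
      nlinarith
    have h3 : -a⁻¹ * φ y + u / a < t := by
      rw [neg_mul, ← div_eq_inv_mul]
      linarith
    linarith

private lemma moreau_lower_bound (f : H → EReal) (hf₀ : EProper f)
    (hf₁ : LowerSemicontinuous f) (hf₂ : EConvexOn f) (x : H) (r : ℝ)
    (hr : (r : EReal) < f x) :
    ∃ ε₀ : ℝ, 0 < ε₀ ∧ ∀ ε : ℝ, 0 < ε → ε ≤ ε₀ → (r : EReal) ≤ moreau ε f x := by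
  obtain ⟨ψ, c, hmin⟩ := exists_affine_minorant f hf₀ hf₁ hf₂
  have hev := hf₁ x (r : EReal) hr
  rw [Metric.eventually_nhds_iff] at hev
  obtain ⟨δ, hδ0, hδ⟩ := hev
  set K := ‖ψ‖ with hK
  set A := r - (ψ x + c) with hA
  set B := |A| + K ^ 2 + 1 with hB
  have hB0 : 0 < B := by positivity
  refine ⟨min 1 (δ ^ 2 / (4 * B)), lt_min one_pos (by positivity), fun ε hε hεle => ?_⟩
  refine le_iInf fun y => ?_
  rcases lt_or_ge ‖y - x‖ δ with hlt | hge
  · have hfy : (r : EReal) < f y := hδ (by rwa [dist_eq_norm])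
    have hnn : (0 : ℝ) ≤ ‖x - y‖ ^ 2 / (2 * ε) := by positivity
    calc (r : EReal) ≤ f y := hfy.le
    _ ≤ f y + ((‖x - y‖ ^ 2 / (2 * ε) : ℝ) : EReal) :=
        le_add_of_nonneg_right (by exact_mod_cast hnn)
  · set t := ‖y - x‖ with htdef
    have hxy : ‖x - y‖ = t := norm_sub_rev x y
    have hψ : ψ x - K * t ≤ ψ y := by
      have h1 : |ψ (y - x)| ≤ K * t := ψ.le_opNorm _
      have h2 : ψ y - ψ x = ψ (y - x) := by rw [map_sub]
      have h3 := (abs_le.1 h1).1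
      linarith
    have hK0 : 0 ≤ K := norm_nonneg _
    have hkey : A ≤ t ^ 2 / (2 * ε) - K * t :=
      keyineq t δ ε K A B hδ0 hge hε (le_trans hεle (min_le_left _ _))
        (le_trans hεle (min_le_right _ _)) hB hK0
    have hreal : r ≤ ψ y + c + t ^ 2 / (2 * ε) := by
      rw [hA] at hkey; linarith
    calc (r : EReal) ≤ ((ψ y + c + t ^ 2 / (2 * ε) : ℝ) : EReal) := by
          exact_mod_cast hreal
    _ = ((ψ y + c : ℝ) : EReal) + ((t ^ 2 / (2 * ε) : ℝ) : EReal) := by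
          rw [← EReal.coe_add]
    _ ≤ f y + ((‖x - y‖ ^ 2 / (2 * ε) : ℝ) : EReal) := by
          rw [hxy]
          exact add_le_add_left (hmin y) _

private lemma moreau_le_self (f : H → EReal) (ε : ℝ) (x : H) :
    moreau ε f x ≤ f x := by
  have h := iInf_le (fun y : H => f y + ((‖x - y‖ ^ 2 / (2 * ε) : ℝ) : EReal)) x
  simpa [moreau] using h

private lemma moreau_antitone (f : H → EReal) (x : H) (ε₁ ε₂ : ℝ) (h₁ : 0 < ε₁)
    (h₂ : ε₁ ≤ ε₂) : moreau ε₂ f x ≤ moreau ε₁ f x := by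
  refine iInf_mono fun y => ?_
  refine add_le_add_right ?_ _
  rw [EReal.coe_le_coe_iff]
  apply div_le_div_of_nonneg_left (sq_nonneg _) (by linarith) (by linarith)


theorem moreau_tendsto_of_eps (f : H → EReal)
    (hf₀ : EProper f) (hf₁ : LowerSemicontinuous f) (hf₂ : EConvexOn f) (x : H) :
    (∀ ε₁ ε₂ : ℝ, 0 < ε₁ → ε₁ ≤ ε₂ → moreau ε₂ f x ≤ moreau ε₁ f x) ∧
    (⨆ ε : ℝ, ⨆ _ : 0 < ε, moreau ε f x) = f x ∧
    Tendsto (fun ε : ℝ => moreau ε f x) (𝓝[>] 0) (𝓝 (f x)) := by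
  have hmono : ∀ ε₁ ε₂ : ℝ, 0 < ε₁ → ε₁ ≤ ε₂ → moreau ε₂ f x ≤ moreau ε₁ f x :=
    fun ε₁ ε₂ h₁ h₂ => moreau_antitone f x ε₁ ε₂ h₁ h₂
  have hsup : (⨆ ε : ℝ, ⨆ _ : 0 < ε, moreau ε f x) = f x := by
    apply le_antisymm
    · exact iSup₂_le fun ε _ => moreau_le_self f ε x
    · refine le_of_forall_lt fun b hb => ?_
      obtain ⟨r, hbr, hrf⟩ := EReal.exists_between_coe_real hb
      obtain ⟨ε₀, hε₀, hε₀r⟩ := moreau_lower_bound f hf₀ hf₁ hf₂ x r hrf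
      refine lt_of_lt_of_le hbr (le_trans (hε₀r ε₀ hε₀ le_rfl) ?_)
      exact le_iSup₂_of_le ε₀ hε₀ le_rfl
  refine ⟨hmono, hsup, ?_⟩
  rw [tendsto_order]
  constructor
  · intro b hb
    obtain ⟨r, hbr, hrf⟩ := EReal.exists_between_coe_real hb
    obtain ⟨ε₀, hε₀, hε₀r⟩ := moreau_lower_bound f hf₀ hf₁ hf₂ x r hrf
    have hIoc : Set.Ioc (0:ℝ) ε₀ ∈ 𝓝[>] (0:ℝ) :=
      Ioc_mem_nhdsGT_of_mem ⟨le_rfl, hε₀⟩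
    filter_upwards [hIoc] with ε hε
    exact lt_of_lt_of_le hbr (hε₀r ε hε.1 hε.2)
  · intro b hb
    filter_upwards [self_mem_nhdsWithin] with ε _
    exact lt_of_le_of_lt (moreau_le_self f ε x) hb
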